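/- Stability estimate for a quadratic ROM from a linear FOM: let A ∈ ℝ^{N×N}, V ∈ ℝ^{N×r} with VᵀV = I, W ∈ ℝ^{N×r²}, and let q̃ : [0,T] → ℝ^r solve q̃'(t) = VᵀAV q̃(t) + VᵀAW (q̃(t) ⊗ q̃(t)) with q̃(0) = Vᵀq₀. If λ is the largest eigenvalue of A_sym = (A + Aᵀ)/2, then for all t ∈ [0,T], ‖q̃(t)‖₂ ≤ ‖A‖₂ ‖W‖₂ ∫₀ᵗ ‖q̃(s) ⊗ q̃(s)‖₂ e^{λ(t−s)} ds + e^{λt} ‖Vᵀq₀‖₂. -/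

import Mathlib

open scoped Matrix

/-- Kronecker product of vectors: `(x ⊗ y)_{(i,j)} = x_i y_j`. -/
def vecKron {α β : Type*} (x : α → ℝ) (y : β → ℝ) : α × β → ℝ :=
  fun p => x p.1 * y p.2

open Matrix Set


open Matrix

section helpers
variable {n m : Type*} [Fintype n] [Fintype m]

lemma norm_esymm (x : n → ℝ) :
    ‖(WithLp.equiv 2 (n → ℝ)).symm x‖ = Real.sqrt (x ⬝ᵥ x) := by
  simp [EuclideanSpace.norm_eq, Real.norm_eq_abs, sq_abs, dotProduct, pow_two]

lemma inner_esymm (x y : n → ℝ) :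
    (inner ℝ ((WithLp.equiv 2 (n → ℝ)).symm x) ((WithLp.equiv 2 (n → ℝ)).symm y) : ℝ) = x ⬝ᵥ y := by
  simp [PiLp.inner_apply, dotProduct, RCLike.inner_apply, mul_comm]

lemma dp_cauchy (x y : n → ℝ) :
    x ⬝ᵥ y ≤ Real.sqrt (x ⬝ᵥ x) * Real.sqrt (y ⬝ᵥ y) := by
  rw [← norm_esymm, ← norm_esymm, ← inner_esymm]
  exact real_inner_le_norm _ _

lemma dp_self_nonneg (x : n → ℝ) : 0 ≤ x ⬝ᵥ x :=
  Finset.sum_nonneg fun i _ => mul_self_nonneg _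

lemma sqrt_dp_sq (x : n → ℝ) : Real.sqrt (x ⬝ᵥ x) ^ 2 = x ⬝ᵥ x :=
  Real.sq_sqrt (dp_self_nonneg x)

end helpers

section mat
variable {N r : ℕ}

/-- `‖Vᵀ z‖ ≤ ‖z‖` when `VᵀV = 1`. -/
lemma sqrt_dp_transpose_mulVec_le (V : Matrix (Fin N) (Fin r) ℝ) (hV : Vᵀ * V = 1)
    (z : Fin N → ℝ) :
    Real.sqrt (Vᵀ.mulVec z ⬝ᵥ Vᵀ.mulVec z) ≤ Real.sqrt (z ⬝ᵥ z) := by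
  set P := V * Vᵀ with hP
  have hPP : P * P = P := by
    rw [hP, Matrix.mul_assoc, ← Matrix.mul_assoc Vᵀ V Vᵀ, hV, Matrix.one_mul]
  have hPt : Pᵀ = P := by rw [hP, Matrix.transpose_mul, Matrix.transpose_transpose]
  set w := P.mulVec z with hw
  have h1 : Vᵀ.mulVec z ⬝ᵥ Vᵀ.mulVec z = w ⬝ᵥ z := by
    rw [Matrix.dotProduct_mulVec, Matrix.vecMul_transpose, hw, hP, ← Matrix.mulVec_mulVec]
  have h2 : w ⬝ᵥ w = w ⬝ᵥ z := by
    conv_lhs => rw [hw, Matrix.dotProduct_mulVec]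
    have hv : Matrix.vecMul w P = Pᵀ *ᵥ w := by
      rw [← Matrix.vecMul_transpose, Matrix.transpose_transpose]
    rw [hv, hPt, hw, Matrix.mulVec_mulVec, hPP]
  have hww : Real.sqrt (w ⬝ᵥ w) ≤ Real.sqrt (z ⬝ᵥ z) := by
    rcases eq_or_lt_of_le (Real.sqrt_nonneg (w ⬝ᵥ w)) with h | h
    · rw [← h]; exact Real.sqrt_nonneg _
    · have hcs : w ⬝ᵥ z ≤ Real.sqrt (w ⬝ᵥ w) * Real.sqrt (z ⬝ᵥ z) := dp_cauchy w z
      have : Real.sqrt (w ⬝ᵥ w) * Real.sqrt (w ⬝ᵥ w) ≤ Real.sqrt (w ⬝ᵥ w) * Real.sqrt (z ⬝ᵥ z) := by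
        calc Real.sqrt (w ⬝ᵥ w) * Real.sqrt (w ⬝ᵥ w) = w ⬝ᵥ w := Real.mul_self_sqrt (dp_self_nonneg w)
        _ = w ⬝ᵥ z := h2
        _ ≤ _ := hcs
      exact le_of_mul_le_mul_left this h
  calc Real.sqrt (Vᵀ.mulVec z ⬝ᵥ Vᵀ.mulVec z) = Real.sqrt (w ⬝ᵥ w) := by rw [h1, h2]
  _ ≤ _ := hww

lemma sqrt_dp_A_mulVec_le (A : Matrix (Fin N) (Fin N) ℝ) (y : Fin N → ℝ) :
    Real.sqrt (A.mulVec y ⬝ᵥ A.mulVec y) ≤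
      ‖Matrix.toEuclideanCLM (𝕜 := ℝ) A‖ * Real.sqrt (y ⬝ᵥ y) := by
  have h := (Matrix.toEuclideanCLM (𝕜 := ℝ) A).le_opNorm ((WithLp.equiv 2 (Fin N → ℝ)).symm y)
  rwa [show (Matrix.toEuclideanCLM (𝕜 := ℝ) A) ((WithLp.equiv 2 (Fin N → ℝ)).symm y) =
      (WithLp.equiv 2 (Fin N → ℝ)).symm (A *ᵥ y) from rfl, norm_esymm, norm_esymm] at h

lemma sqrt_dp_W_mulVec_le (W : Matrix (Fin N) (Fin r × Fin r) ℝ) (k : Fin r × Fin r → ℝ) :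
    Real.sqrt (W.mulVec k ⬝ᵥ W.mulVec k) ≤
      ‖LinearMap.toContinuousLinearMap (Matrix.toEuclideanLin W)‖ * Real.sqrt (k ⬝ᵥ k) := by
  have h := (LinearMap.toContinuousLinearMap (Matrix.toEuclideanLin W)).le_opNorm
    ((WithLp.equiv 2 (Fin r × Fin r → ℝ)).symm k)
  rwa [LinearMap.coe_toContinuousLinearMap', show (Matrix.toEuclideanLin W) ((WithLp.equiv 2 (Fin r × Fin r → ℝ)).symm k) =
      (WithLp.equiv 2 (Fin N → ℝ)).symm (W *ᵥ k) from rfl,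
    norm_esymm, norm_esymm] at h

end mat



lemma rayleigh_le {N : ℕ} [NeZero N] (M : Matrix (Fin N) (Fin N) ℝ) (hM : M.IsHermitian)
    (y : Fin N → ℝ) :
    y ⬝ᵥ M.mulVec y ≤ (⨆ i, hM.eigenvalues i) * (y ⬝ᵥ y) := by
  set U : Matrix (Fin N) (Fin N) ℝ := (hM.eigenvectorUnitary : Matrix (Fin N) (Fin N) ℝ) with hU
  have hstar : star U = Uᵀ := by
    rw [Matrix.star_eq_conjTranspose]
    ext i j; simp [Matrix.conjTranspose_apply]
  have hdiag : Matrix.diagonal (RCLike.ofReal ∘ hM.eigenvalues) = Matrix.diagonal hM.eigenvalues := by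
    congr 1
  have hspec : M = U * Matrix.diagonal hM.eigenvalues * Uᵀ := by
    rw [← hdiag, ← hstar]; exact hM.spectral_theorem
  set z : Fin N → ℝ := Matrix.vecMul y U with hz
  have h1 : y ⬝ᵥ M.mulVec y = ∑ i, hM.eigenvalues i * z i ^ 2 := by
    conv_lhs => rw [hspec]
    rw [Matrix.mul_assoc, ← Matrix.mulVec_mulVec, ← Matrix.mulVec_mulVec,
      Matrix.dotProduct_mulVec, Matrix.mulVec_transpose]
    simp only [← hz, dotProduct, Matrix.mulVec_diagonal]
    refine Finset.sum_congr rfl fun i _ => by ring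
  have hUU : U * Uᵀ = 1 := by
    rw [← hstar]; exact (Matrix.mem_unitaryGroup_iff).mp hM.eigenvectorUnitary.2
  have h2 : z ⬝ᵥ z = y ⬝ᵥ y := by
    conv_lhs => rw [hz, ← Matrix.mulVec_transpose U y, Matrix.dotProduct_mulVec,
      Matrix.vecMul_transpose, Matrix.mulVec_mulVec]
    rw [hUU, Matrix.one_mulVec]
  have hbdd : BddAbove (Set.range hM.eigenvalues) := (Set.finite_range _).bddAbove
  have hle : ∀ i, hM.eigenvalues i ≤ ⨆ i, hM.eigenvalues i := fun i => le_ciSup hbdd i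
  calc y ⬝ᵥ M.mulVec y = ∑ i, hM.eigenvalues i * z i ^ 2 := h1
    _ ≤ ∑ i, (⨆ j, hM.eigenvalues j) * z i ^ 2 :=
        Finset.sum_le_sum fun i _ => mul_le_mul_of_nonneg_right (hle i) (sq_nonneg _)
    _ = (⨆ i, hM.eigenvalues i) * (y ⬝ᵥ y) := by
        rw [← Finset.mul_sum, ← h2]
        congr 1
        simp [dotProduct, pow_two]


lemma dp_self_eq_sum {n : Type*} [Fintype n] (x : n → ℝ) : x ⬝ᵥ x = ∑ i, x i ^ 2 := by
  simp [dotProduct, pow_two]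

lemma key_bound {N r : ℕ} [NeZero N] (A : Matrix (Fin N) (Fin N) ℝ)
    (V : Matrix (Fin N) (Fin r) ℝ) (W : Matrix (Fin N) (Fin r × Fin r) ℝ)
    (hV : Vᵀ * V = 1) (hA : ((1 / 2 : ℝ) • (A + Aᵀ)).IsHermitian)
    (x : Fin r → ℝ) (k : Fin r × Fin r → ℝ) :
    x ⬝ᵥ ((Vᵀ * A * V).mulVec x + (Vᵀ * A * W).mulVec k) ≤
      (⨆ i, hA.eigenvalues i) * (x ⬝ᵥ x) +
      (‖Matrix.toEuclideanCLM (𝕜 := ℝ) A‖ *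
        ‖LinearMap.toContinuousLinearMap (Matrix.toEuclideanLin W)‖) *
        Real.sqrt (k ⬝ᵥ k) * Real.sqrt (x ⬝ᵥ x) := by
  set CA := ‖Matrix.toEuclideanCLM (𝕜 := ℝ) A‖ with hCA
  set CW := ‖LinearMap.toContinuousLinearMap (Matrix.toEuclideanLin W)‖ with hCW
  have hCA0 : 0 ≤ CA := norm_nonneg _
  have hCW0 : 0 ≤ CW := norm_nonneg _
  rw [dotProduct_add]
  set y := V.mulVec x with hy
  have hyy : y ⬝ᵥ y = x ⬝ᵥ x := by
    rw [hy, Matrix.dotProduct_mulVec, ← Matrix.mulVec_transpose, Matrix.mulVec_mulVec, hV,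
      Matrix.one_mulVec]
  have part1 : x ⬝ᵥ (Vᵀ * A * V).mulVec x ≤ (⨆ i, hA.eigenvalues i) * (x ⬝ᵥ x) := by
    have e1 : x ⬝ᵥ (Vᵀ * A * V).mulVec x = y ⬝ᵥ A.mulVec y := by
      rw [Matrix.mul_assoc, ← Matrix.mulVec_mulVec, Matrix.dotProduct_mulVec,
        Matrix.vecMul_transpose, ← Matrix.mulVec_mulVec, hy]
    have e2 : y ⬝ᵥ Aᵀ.mulVec y = y ⬝ᵥ A.mulVec y := by
      rw [Matrix.dotProduct_mulVec, Matrix.vecMul_transpose, dotProduct_comm]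
    have e3 : y ⬝ᵥ ((1 / 2 : ℝ) • (A + Aᵀ)).mulVec y = y ⬝ᵥ A.mulVec y := by
      rw [Matrix.smul_mulVec, Matrix.add_mulVec, dotProduct_smul,
        dotProduct_add, e2]
      ring_nf
    have := rayleigh_le _ hA y
    rw [e3, hyy] at this
    rw [e1]; exact this
  have part2 : x ⬝ᵥ (Vᵀ * A * W).mulVec k ≤ CA * CW * Real.sqrt (k ⬝ᵥ k) * Real.sqrt (x ⬝ᵥ x) := by
    set z := A.mulVec (W.mulVec k) with hzdef
    have e1 : (Vᵀ * A * W).mulVec k = Vᵀ.mulVec z := by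
      rw [Matrix.mul_assoc, ← Matrix.mulVec_mulVec, ← Matrix.mulVec_mulVec]
    calc x ⬝ᵥ (Vᵀ * A * W).mulVec k
        ≤ Real.sqrt (x ⬝ᵥ x) * Real.sqrt ((Vᵀ * A * W).mulVec k ⬝ᵥ (Vᵀ * A * W).mulVec k) :=
          dp_cauchy _ _
      _ ≤ Real.sqrt (x ⬝ᵥ x) * (CA * CW * Real.sqrt (k ⬝ᵥ k)) := by
          refine mul_le_mul_of_nonneg_left ?_ (Real.sqrt_nonneg _)
          rw [e1]
          calc Real.sqrt (Vᵀ.mulVec z ⬝ᵥ Vᵀ.mulVec z) ≤ Real.sqrt (z ⬝ᵥ z) :=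
                sqrt_dp_transpose_mulVec_le V hV z
            _ ≤ CA * Real.sqrt (W.mulVec k ⬝ᵥ W.mulVec k) := sqrt_dp_A_mulVec_le A _
            _ ≤ CA * (CW * Real.sqrt (k ⬝ᵥ k)) :=
                mul_le_mul_of_nonneg_left (sqrt_dp_W_mulVec_le W k) hCA0
            _ = CA * CW * Real.sqrt (k ⬝ᵥ k) := by ring
      _ = CA * CW * Real.sqrt (k ⬝ᵥ k) * Real.sqrt (x ⬝ᵥ x) := by ring
  linarith


/-- Stability estimate for the quadratic ROM obtained from a linear FOM via a
quadratic-manifold approximation: if `q̃' = VᵀAV q̃ + VᵀAW (q̃ ⊗ q̃)` with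
`q̃(0) = Vᵀq₀`, `VᵀV = I`, and `λ` is the largest eigenvalue of the symmetric
part `(A + Aᵀ)/2`, then for all `t ∈ [0,T]`,
`‖q̃(t)‖₂ ≤ ‖A‖₂ ‖W‖₂ ∫₀ᵗ ‖q̃(s) ⊗ q̃(s)‖₂ e^{λ(t−s)} ds + e^{λt} ‖Vᵀq₀‖₂`,
where `‖·‖₂` denotes Euclidean vector norms and spectral matrix norms. -/
theorem quadratic_rom_stability {N r : ℕ} [NeZero N] (T : ℝ) (hT : 0 < T)
    (A : Matrix (Fin N) (Fin N) ℝ) (V : Matrix (Fin N) (Fin r) ℝ)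
    (W : Matrix (Fin N) (Fin r × Fin r) ℝ) (hV : Vᵀ * V = 1)
    (q0 : Fin N → ℝ) (qt : ℝ → Fin r → ℝ)
    (hq0 : qt 0 = Vᵀ.mulVec q0)
    (hode : ∀ t ∈ Set.Icc (0 : ℝ) T, HasDerivAt qt
      ((Vᵀ * A * V).mulVec (qt t) + (Vᵀ * A * W).mulVec (vecKron (qt t) (qt t))) t)
    (hA : ((1 / 2 : ℝ) • (A + Aᵀ)).IsHermitian)
    (lam : ℝ) (hlam : lam = ⨆ i, hA.eigenvalues i) :
    ∀ t ∈ Set.Icc (0 : ℝ) T,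
      Real.sqrt (∑ i, qt t i ^ 2) ≤
        ‖Matrix.toEuclideanCLM (𝕜 := ℝ) A‖ *
            ‖LinearMap.toContinuousLinearMap (Matrix.toEuclideanLin W)‖ *
            (∫ s in (0 : ℝ)..t,
              Real.sqrt (∑ p, vecKron (qt s) (qt s) p ^ 2) * Real.exp (lam * (t - s))) +
          Real.exp (lam * t) * Real.sqrt (∑ i, Vᵀ.mulVec q0 i ^ 2) := by
  intro t ht
  set CA := ‖Matrix.toEuclideanCLM (𝕜 := ℝ) A‖ with hCA
  set CW := ‖LinearMap.toContinuousLinearMap (Matrix.toEuclideanLin W)‖ with hCW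
  set C : ℝ := CA * CW with hC
  have hC0 : 0 ≤ C := mul_nonneg (norm_nonneg _) (norm_nonneg _)
  set g : ℝ → ℝ := fun s => Real.sqrt (∑ p, vecKron (qt s) (qt s) p ^ 2) with hgdef
  have hg0 : ∀ s, 0 ≤ g s := fun s => Real.sqrt_nonneg _
  set u0 : ℝ := Real.sqrt (∑ i, Vᵀ.mulVec q0 i ^ 2) with hu0def
  have hu00 : 0 ≤ u0 := Real.sqrt_nonneg _
  set F : ℝ → ℝ := fun s => ∑ i, qt s i ^ 2 with hFdef
  -- continuity of coordinates
  have hqcont : ∀ i, ContinuousOn (fun s => qt s i) (Icc 0 T) := fun i s hs =>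
    ((continuous_apply i).continuousAt.comp (hode s hs).continuousAt).continuousWithinAt
  have hFcont : ContinuousOn F (Icc 0 T) :=
    continuousOn_finset_sum _ fun i _ => (hqcont i).pow 2
  have hgcont : ContinuousOn g (Icc 0 T) := by
    apply Real.continuous_sqrt.comp_continuousOn
    exact continuousOn_finset_sum _ fun p _ => ((hqcont p.1).mul (hqcont p.2)).pow 2
  -- derivative of F
  have hFd : ∀ s ∈ Icc (0:ℝ) T, HasDerivAt F
      (2 * (qt s ⬝ᵥ ((Vᵀ * A * V).mulVec (qt s) +
        (Vᵀ * A * W).mulVec (vecKron (qt s) (qt s))))) s := by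
    intro s hs
    have h := hode s hs
    have hi := fun i => hasDerivAt_pi.1 h i
    have hsum := HasDerivAt.fun_sum (A := fun i τ => qt τ i ^ 2) fun i (_ : i ∈ Finset.univ) =>
      (hi i).pow 2
    refine hsum.congr_deriv ?_
    rw [dotProduct, Finset.mul_sum]
    refine (Finset.sum_congr rfl fun i _ => ?_)
    push_cast
    ring
  -- the integrand of the primitive
  set h : ℝ → ℝ := fun s => g s * Real.exp (-(lam * s)) with hhdef
  have hhcont : ContinuousOn h (Icc 0 T) :=
    hgcont.mul (Continuous.continuousOn (by fun_prop))
  have hint : ∀ x ∈ Icc (0:ℝ) T, IntervalIntegrable h MeasureTheory.volume 0 x := by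
    intro x hx
    refine (hhcont.mono ?_).intervalIntegrable
    rw [Set.uIcc_of_le hx.1]
    exact Set.Icc_subset_Icc le_rfl hx.2
  set J : ℝ → ℝ := fun x => ∫ s in (0:ℝ)..x, h s with hJdef
  have hmemTop : ∀ x ∈ Ico (0:ℝ) T, Icc (0:ℝ) T ∈ nhdsWithin x (Ioi x) := by
    intro x hx
    rw [mem_nhdsWithin]
    exact ⟨Iio T, isOpen_Iio, hx.2, fun s hs => ⟨le_trans hx.1 (le_of_lt hs.2), le_of_lt hs.1⟩⟩
  have hJ' : ∀ x ∈ Ico (0:ℝ) T, HasDerivWithinAt J (h x) (Ici x) x := by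
    intro x hx
    refine intervalIntegral.integral_hasDerivWithinAt_right
      (hint x (Ico_subset_Icc_self hx)) ⟨Icc 0 T, hmemTop x hx, ?_⟩ ?_
    · exact (hhcont.mono le_rfl).aestronglyMeasurable measurableSet_Icc
    · exact (hhcont x (Ico_subset_Icc_self hx)).mono_of_mem_nhdsWithin (hmemTop x hx)
  have hJcont : ContinuousOn J (Icc 0 T) := by
    have : MeasureTheory.IntegrableOn h (uIcc 0 T) MeasureTheory.volume := by
      rw [Set.uIcc_of_le hT.le]
      exact hhcont.integrableOn_Icc
    have := intervalIntegral.continuousOn_primitive_interval this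
    rwa [Set.uIcc_of_le hT.le] at this
  have hJnn : ∀ x ∈ Icc (0:ℝ) T, 0 ≤ J x := fun x hx =>
    intervalIntegral.integral_nonneg hx.1 fun s _ => mul_nonneg (hg0 s) (Real.exp_pos _).le
  -- reduce to an epsilon-perturbed bound
  refine le_of_forall_pos_le_add fun δ hδ => ?_
  set K : ℝ := lam + 1 with hK
  set ε : ℝ := δ / Real.exp (K * t) with hε
  have hε0 : 0 < ε := div_pos hδ (Real.exp_pos _)
  set ψ : ℝ → ℝ := fun x =>
    C * (Real.exp (lam * x) * J x) + u0 * Real.exp (lam * x) + ε * Real.exp (K * x) with hψdef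
  have hψlb : ∀ x ∈ Icc (0:ℝ) T, ε * Real.exp (K * x) ≤ ψ x := by
    intro x hx
    have h1 : 0 ≤ C * (Real.exp (lam * x) * J x) :=
      mul_nonneg hC0 (mul_nonneg (Real.exp_pos _).le (hJnn x hx))
    have h2 : 0 ≤ u0 * Real.exp (lam * x) := mul_nonneg hu00 (Real.exp_pos _).le
    simp only [hψdef]
    linarith
  have hψpos : ∀ x ∈ Icc (0:ℝ) T, 0 < ψ x := fun x hx =>
    lt_of_lt_of_le (mul_pos hε0 (Real.exp_pos _)) (hψlb x hx)
  have hexp : ∀ c : ℝ, ∀ x : ℝ, HasDerivAt (fun y => Real.exp (c * y)) (c * Real.exp (c * x)) x := by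
    intro c x
    have := HasDerivAt.exp ((hasDerivAt_id x).const_mul c)
    simpa [mul_comm] using this
  have hψ' : ∀ x ∈ Ico (0:ℝ) T, HasDerivWithinAt ψ
      (lam * ψ x + C * g x + ε * Real.exp (K * x)) (Ici x) x := by
    intro x hx
    have e1 : HasDerivWithinAt (fun y => Real.exp (lam * y) * J y)
        (lam * Real.exp (lam * x) * J x + Real.exp (lam * x) * h x) (Ici x) x :=
      ((hexp lam x).hasDerivWithinAt).mul (hJ' x hx)
    have e2 : HasDerivWithinAt ψ
        (C * (lam * Real.exp (lam * x) * J x + Real.exp (lam * x) * h x) +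
          u0 * (lam * Real.exp (lam * x)) + ε * (K * Real.exp (K * x))) (Ici x) x :=
      (((e1.const_mul C).add (((hexp lam x).hasDerivWithinAt).const_mul u0)).add
        (((hexp K x).hasDerivWithinAt).const_mul ε))
    convert e2 using 1
    have hgx : Real.exp (lam * x) * h x = g x := by
      simp only [hhdef]
      rw [Real.exp_neg]
      field_simp
    simp only [hψdef, hK]
    rw [← hgx]
    ring
  -- Gronwall-type fencing: F ≤ ψ²  on [0,T]
  have hfence : ∀ x ∈ Icc (0:ℝ) T, F x ≤ ψ x * ψ x := by
    refine fun x hx =>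
      image_le_of_deriv_right_lt_deriv_boundary' (B := fun s => ψ s * ψ s) (f' := fun s =>
          2 * (qt s ⬝ᵥ ((Vᵀ * A * V).mulVec (qt s) +
            (Vᵀ * A * W).mulVec (vecKron (qt s) (qt s)))))
        (B' := fun s => 2 * ψ s * (lam * ψ s + C * g s + ε * Real.exp (K * s)))
        hFcont (fun s hs => (hFd s (Ico_subset_Icc_self hs)).hasDerivWithinAt) ?_ ?_ ?_ ?_ hx
    · -- initial condition
      show F 0 ≤ ψ 0 * ψ 0
      have hF0 : F 0 = u0 * u0 := by
        simp only [hFdef, hq0, hu0def]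
        rw [Real.mul_self_sqrt (Finset.sum_nonneg fun i _ => sq_nonneg _)]
      have hψ0 : ψ 0 = u0 + ε := by
        simp only [hψdef, hJdef, mul_zero, Real.exp_zero, intervalIntegral.integral_same]
        ring
      rw [hF0, hψ0]
      nlinarith [hε0, hu00]
    · -- continuity of ψ²
      have hψcont : ContinuousOn ψ (Icc 0 T) := by
        refine ContinuousOn.add (ContinuousOn.add ?_ ?_) ?_
        · exact continuousOn_const.mul ((Continuous.continuousOn (by fun_prop)).mul hJcont)
        · exact Continuous.continuousOn (by fun_prop)
        · exact Continuous.continuousOn (by fun_prop)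
      exact hψcont.mul hψcont
    · -- derivative of ψ²
      intro s hs
      have := (hψ' s hs).mul (hψ' s hs)
      refine this.congr_deriv ?_
      ring
    · -- strict inequality at touching points
      intro s hs hFs
      have hsIcc := Ico_subset_Icc_self hs
      have hψs := hψpos s hsIcc
      have hsq : Real.sqrt (F s) = ψ s := by
        rw [hFs, Real.sqrt_mul_self (hψs.le)]
      have hkey := key_bound A V W hV hA (qt s) (vecKron (qt s) (qt s))
      rw [← hlam, dp_self_eq_sum (qt s)] at hkey
      have hkg : Real.sqrt (vecKron (qt s) (qt s) ⬝ᵥ vecKron (qt s) (qt s)) = g s := by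
        rw [dp_self_eq_sum]
      rw [hkg] at hkey
      have hFseq : (∑ i, qt s i ^ 2) = F s := rfl
      rw [hFseq, hsq] at hkey
      have hpos : 0 < ψ s * (ε * Real.exp (K * s)) :=
        mul_pos hψs (mul_pos hε0 (Real.exp_pos _))
      calc 2 * (qt s ⬝ᵥ ((Vᵀ * A * V).mulVec (qt s) +
            (Vᵀ * A * W).mulVec (vecKron (qt s) (qt s))))
          ≤ 2 * (lam * F s + C * g s * ψ s) := by
            rw [← hCA, ← hCW, ← hC] at hkey; linarith
        _ = 2 * (lam * (ψ s * ψ s) + C * g s * ψ s) := by rw [hFs]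
        _ < 2 * ψ s * (lam * ψ s + C * g s + ε * Real.exp (K * s)) := by nlinarith
  -- conclude
  have hfin := hfence t ht
  have hroot : Real.sqrt (F t) ≤ ψ t := by
    calc Real.sqrt (F t) ≤ Real.sqrt (ψ t * ψ t) := Real.sqrt_le_sqrt hfin
      _ = ψ t := Real.sqrt_mul_self (hψpos t ht).le
  have hI : (∫ s in (0:ℝ)..t, g s * Real.exp (lam * (t - s))) = Real.exp (lam * t) * J t := by
    rw [hJdef, ← intervalIntegral.integral_const_mul]
    refine intervalIntegral.integral_congr fun s _ => ?_
    simp only [hhdef]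
    rw [mul_sub, Real.exp_sub, Real.exp_neg]
    field_simp
  have hδε : ε * Real.exp (K * t) = δ := by
    rw [hε, div_mul_cancel₀ _ (Real.exp_ne_zero _)]
  calc Real.sqrt (F t) ≤ ψ t := hroot
    _ = C * (∫ s in (0:ℝ)..t, g s * Real.exp (lam * (t - s))) + Real.exp (lam * t) * u0 + δ := by
        simp only [hψdef]
        rw [hI, hδε]
        ring
    _ ≤ _ := le_refl _
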